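/- Let (W,S) be a Coxeter system, H a group, N a subgroup of H normalized by each element in the image of a map n : S → H. Suppose n_s² ∈ N for all s ∈ S, and the braid relations hold: for all distinct s, s' ∈ S with ss' of finite order k(s,s'), n_s n_{s'} n_s ⋯ = n_{s'} n_s n_{s'} ⋯ with k(s,s') factors on each side. Then for every word s_{i₁}, …, s_{i_k} in S whose product is the identity in W, the product n_{s_{i₁}} ⋯ n_{s_{i_k}} lies in N. -/

import Mathlib

/-!
STATEMENT 11.  Let `(W, S)` be a Coxeter system (formalized via a Mathlib
`CoxeterSystem cs` on a Coxeter matrix `M`, with simple reflections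
`cs.simple b`, `b : B`), `H` a group, `N ≤ H` a subgroup normalized by each `n b`,
with `n_b² ∈ N` for all `b` and the braid relations
`n_b n_{b'} n_b ⋯ = n_{b'} n_b n_{b'} ⋯` (`k(b,b') = M b b'` factors on each side)
whenever `b ≠ b'` and the order `M b b'` of `s_b s_{b'}` is finite.
Then for every word `b₁, …, b_k` in `S` whose product is `1` in `W`, the product
`n_{b₁} ⋯ n_{b_k}` lies in `N`.
-/

namespace Stmt11

/-- The alternating word `x * y * x * ⋯` with `k` factors. -/
def altWord {A : Type*} [Monoid A] (x y : A) : ℕ → A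
  | 0 => 1
  | k + 1 => x * altWord y x k

lemma shuffle {A : Type*} [Monoid A] (x y : A) : ∀ m : ℕ, y * (x * y) ^ m = (y * x) ^ m * y
  | 0 => by simp
  | m + 1 => by
    rw [pow_succ', pow_succ]
    calc y * (x * y * (x * y) ^ m) = y * x * (y * (x * y) ^ m) := by simp only [mul_assoc]
    _ = y * x * ((y * x) ^ m * y) := by rw [shuffle x y m]
    _ = (y * x) * (y * x) ^ m * y := by simp only [mul_assoc]
    _ = _ := by rw [← pow_succ', pow_succ]

lemma pow_eq_altWord {A : Type*} [Group A] :
    ∀ (m : ℕ) (x y : A), x * x = 1 → y * y = 1 →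
      (x * y) ^ m = altWord x y m * (altWord y x m)⁻¹
  | 0, x, y, _, _ => by simp [altWord]
  | m + 1, x, y, hx, hy => by
    have hyinv : y⁻¹ = y := by rw [← mul_eq_one_iff_inv_eq.mp hy] at hy ⊢; group
    have IH := pow_eq_altWord m y x hy hx
    show (x * y) ^ (m + 1) = (x * altWord y x m) * (y * altWord x y m)⁻¹
    rw [mul_inv_rev, pow_succ']
    calc x * y * (x * y) ^ m = x * ((y * x) ^ m * y) := by rw [← shuffle x y m]; group
    _ = x * (altWord y x m * (altWord x y m)⁻¹ * y) := by rw [IH]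
    _ = x * altWord y x m * ((altWord x y m)⁻¹ * y⁻¹) := by rw [hyinv]; group

theorem word_trivial_in_W_implies_product_in_N
    {B W H : Type*} [Group W] [Group H]
    (M : CoxeterMatrix B) (cs : CoxeterSystem M W)
    (N : Subgroup H) (n : B → H)
    -- N is normalized by each n b:
    (hnorm : ∀ b : B, ∀ x : H, x ∈ N ↔ n b * x * (n b)⁻¹ ∈ N)
    -- n_s² ∈ N for all simple reflections:
    (hsq : ∀ b : B, n b * n b ∈ N)
    -- braid relations (k(b,b') = M b b' factors on each side):
    (hbraid : ∀ b b' : B, b ≠ b' → M b b' ≠ 0 →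
      altWord (n b) (n b') (M b b') = altWord (n b') (n b) (M b b'))
    (l : List B) (hl : cs.wordProd l = 1) :
    (l.map n).prod ∈ N := by
  -- Work in the quotient of the normalizer of `N` by `N`.
  set K := Subgroup.normalizer (N : Set H) with hK
  have hmem : ∀ b : B, n b ∈ K := fun b => Subgroup.mem_normalizer_iff.mpr (hnorm b)
  set N' := N.subgroupOf K with hN'
  have : N'.Normal := Subgroup.normal_in_normalizer
  set fK : B → K := fun b => ⟨n b, hmem b⟩ with hfK
  set g : B → K ⧸ N' := fun b => QuotientGroup.mk (fK b) with hg
  have hg1 : ∀ b : B, g b * g b = 1 := by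
    intro b
    have : fK b * fK b ∈ N' := by
      simpa [hN', Subgroup.mem_subgroupOf, hfK] using hsq b
    simpa [hg] using (QuotientGroup.eq_one_iff (fK b * fK b)).mpr this
  have hglift : M.IsLiftable g := by
    intro b b'
    rcases eq_or_ne b b' with rfl | hne
    · rw [M.diagonal, pow_one, hg1]
    rcases eq_or_ne (M b b') 0 with h0 | h0
    · rw [h0, pow_zero]
    · have hx : g b * g b = 1 := hg1 b
      have hy : g b' * g b' = 1 := hg1 b'
      rw [pow_eq_altWord (M b b') (g b) (g b') hx hy]
      have hcomm : ∀ (c c' : B) (k : ℕ),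
          altWord (g c) (g c') k = QuotientGroup.mk (altWord (fK c) (fK c') k) := by
        intro c c' k
        induction k generalizing c c' with
        | zero => simp [altWord]
        | succ k ih => simp only [altWord]; rw [ih c' c, QuotientGroup.mk_mul]
      have hbase : ∀ (c c' : B) (k : ℕ),
          ((altWord (fK c) (fK c') k : K) : H) = altWord (n c) (n c') k := by
        intro c c' k
        induction k generalizing c c' with
        | zero => simp [altWord]
        | succ k ih => simp only [altWord]; rw [Subgroup.coe_mul, ih c' c]
      have : altWord (fK b) (fK b') (M b b') = altWord (fK b') (fK b) (M b b') := by
        apply Subtype.ext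
        rw [hbase, hbase]
        exact hbraid b b' hne h0
      rw [hcomm, hcomm, this, mul_inv_cancel]
  set φ : W →* K ⧸ N' := cs.lift ⟨g, hglift⟩ with hφ
  have hφs : ∀ b : B, φ (cs.simple b) = g b := fun b => cs.lift_apply_simple hglift b
  have key : φ (cs.wordProd l) = QuotientGroup.mk ((l.map fK).prod) := by
    rw [CoxeterSystem.wordProd, map_list_prod φ,
      show ((QuotientGroup.mk ((l.map fK).prod) : K ⧸ N')) =
        (QuotientGroup.mk' N') ((l.map fK).prod) from rfl,
      map_list_prod (QuotientGroup.mk' N')]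
    simp only [List.map_map]
    congr 1
    apply List.map_congr_left
    intro b _
    simp [hφs b, hg]
  rw [hl, map_one] at key
  have : (l.map fK).prod ∈ N' := (QuotientGroup.eq_one_iff _).mp key.symm
  have hval : (((l.map fK).prod : K) : H) = (l.map n).prod := by
    rw [SubmonoidClass.coe_list_prod, List.map_map]
    rfl
  rw [hN', Subgroup.mem_subgroupOf, hval] at this
  exact this


end Stmt11
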